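/- arXiv:2310.12621 — 2 statements merged into one kernel-verified Lean document; each statement's English description precedes it below -/
import Mathlib

section
/- Let R be a commutative ring, E ⊆ Spec(R), and π : R → ∏_{𝔭∈E} κ(𝔭) the canonical ring homomorphism into the product of residue fields. Then the image of the induced map π* : Spec(∏_{𝔭∈E} κ(𝔭)) → Spec(R) equals the closure of E in the patch (constructible) topology on Spec(R). -/
/-- The patch (constructible) topology on `Spec R`: the sets `V(a)` and `D(a)`, `a ∈ R`,
form a subbasis of opens. -/
def patchTopology (R : Type*) [CommRing R] : TopologicalSpace (PrimeSpectrum R) :=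
  TopologicalSpace.generateFrom
    ({U | ∃ a : R, U = PrimeSpectrum.zeroLocus {a}} ∪
      {U | ∃ a : R, U = (PrimeSpectrum.zeroLocus {a})ᶜ})

/-- Residue field of `R` at a prime `𝔭`. -/
noncomputable abbrev residueFieldAt {R : Type*} [CommRing R] (p : PrimeSpectrum R) :=
  IsLocalRing.ResidueField (Localization.AtPrime p.asIdeal)

open Classical in
/-- indicator idempotent of a subset -/
noncomputable def eIdem {R : Type*} [CommRing R] {E : Set (PrimeSpectrum R)}
    (A : Set E) : ∀ p : E, residueFieldAt (p : PrimeSpectrum R) :=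
  fun p => if p ∈ A then 1 else 0

lemma algebraMap_residueFieldAt_eq_zero_iff {R : Type*} [CommRing R] (p : PrimeSpectrum R)
    (a : R) : algebraMap R (residueFieldAt p) a = 0 ↔ a ∈ p.asIdeal := by
  rw [IsScalarTower.algebraMap_apply R (Localization.AtPrime p.asIdeal) (residueFieldAt p),
    IsLocalRing.ResidueField.algebraMap_eq, IsLocalRing.residue_eq_zero_iff]
  exact IsLocalization.AtPrime.to_map_mem_maximal_iff _ p.asIdeal a

/-- Key closure criterion via ultrafilters. -/
lemma mem_patchClosure_of_ultrafilter {R : Type*} [CommRing R] (E : Set (PrimeSpectrum R))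
    (q : PrimeSpectrum R) (U : Ultrafilter E)
    (h : ∀ a : R, a ∈ q.asIdeal ↔ {p : E | a ∈ (p : PrimeSpectrum R).asIdeal} ∈ U) :
    q ∈ @closure _ (patchTopology R) E := by
  letI := patchTopology R
  rw [mem_closure_iff]
  intro o ho hq
  suffices hU : {p : E | (p : PrimeSpectrum R) ∈ o} ∈ U by
    obtain ⟨p, hp⟩ := Filter.nonempty_of_mem (f := (U : Filter E)) hU
    exact ⟨(p : PrimeSpectrum R), hp, p.2⟩
  have ho' : TopologicalSpace.GenerateOpen
      ({U | ∃ a : R, U = PrimeSpectrum.zeroLocus {a}} ∪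
        {U | ∃ a : R, U = (PrimeSpectrum.zeroLocus {a})ᶜ}) o := ho
  clear ho
  revert hq
  induction ho' with
  | basic s hs =>
    intro hq
    rcases hs with ⟨a, rfl⟩ | ⟨a, rfl⟩
    · have ha : a ∈ q.asIdeal := by
        simpa [PrimeSpectrum.mem_zeroLocus, Set.singleton_subset_iff] using hq
      have := (h a).1 ha
      convert this using 1
      ext p
      simp [PrimeSpectrum.mem_zeroLocus, Set.singleton_subset_iff]
    · have ha : a ∉ q.asIdeal := by
        simpa [PrimeSpectrum.mem_zeroLocus, Set.singleton_subset_iff] using hq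
      have : {p : E | a ∈ (p : PrimeSpectrum R).asIdeal}ᶜ ∈ U :=
        Ultrafilter.compl_mem_iff_notMem.2 (fun hc => ha ((h a).2 hc))
      convert this using 1
      ext p
      simp [PrimeSpectrum.mem_zeroLocus, Set.singleton_subset_iff]
  | univ =>
    intro _
    simp only [Set.mem_univ, Set.setOf_true]
    exact Filter.univ_mem
  | inter s t _ _ ihs iht =>
    intro hq
    exact Filter.mem_of_superset (Filter.inter_mem (ihs hq.1) (iht hq.2))
      (fun p hp => ⟨hp.1, hp.2⟩)
  | sUnion S _ ih =>
    intro hq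
    obtain ⟨s, hsS, hqs⟩ := hq
    exact Filter.mem_of_superset (ih s hsS hqs) (fun p hp => ⟨s, hsS, hp⟩)

/-- The prime ideal of the product of residue fields attached to an ultrafilter. -/
noncomputable def ultraIdeal {R : Type*} [CommRing R] {E : Set (PrimeSpectrum R)}
    (U : Ultrafilter E) : Ideal (∀ p : E, residueFieldAt (p : PrimeSpectrum R)) where
  carrier := {x | {p : E | x p = 0} ∈ U}
  add_mem' := by
    intro x y hx hy
    refine Filter.mem_of_superset (Filter.inter_mem hx hy) ?_
    rintro p ⟨hp1, hp2⟩
    simp only [Set.mem_setOf_eq] at hp1 hp2 ⊢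
    show x p + y p = 0
    rw [hp1, hp2, add_zero]
  zero_mem' := Filter.univ_mem' (fun p => rfl)
  smul_mem' := by
    intro c x hx
    refine Filter.mem_of_superset hx ?_
    intro p hp
    simp only [Set.mem_setOf_eq] at hp ⊢
    show c p * x p = 0
    rw [hp, mul_zero]

lemma ultraIdeal_isPrime {R : Type*} [CommRing R] {E : Set (PrimeSpectrum R)}
    (U : Ultrafilter E) : (ultraIdeal U).IsPrime := by
  constructor
  · intro h1
    rw [Ideal.eq_top_iff_one] at h1
    have : {p : E | (1 : (fun p : E => residueFieldAt (p : PrimeSpectrum R)) p) = 0} ∈ U := h1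
    obtain ⟨p, hp⟩ := Filter.nonempty_of_mem (f := (U : Filter E)) this
    exact one_ne_zero hp
  · intro x y hxy
    have hxy' : {p : E | x p = 0 ∨ y p = 0} ∈ U := by
      filter_upwards [hxy] with p hp
      simpa using mul_eq_zero.mp hp
    rcases Ultrafilter.eventually_or.mp hxy' with h | h
    · exact Or.inl h
    · exact Or.inr h

/-- For `E ⊆ Spec R` and the canonical map `π : R → ∏_{𝔭∈E} κ(𝔭)`, the image of the
induced map `π* : Spec (∏_{𝔭∈E} κ(𝔭)) → Spec R` equals the closure of `E` in the patch
(constructible) topology. -/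
theorem stmt_5 {R : Type*} [CommRing R] (E : Set (PrimeSpectrum R)) :
    Set.range
        (PrimeSpectrum.comap
          (Pi.ringHom fun p : E => algebraMap R (residueFieldAt (p : PrimeSpectrum R)))) =
      @closure _ (patchTopology R) E := by
  classical
  letI := patchTopology R
  set π := Pi.ringHom fun p : E => algebraMap R (residueFieldAt (p : PrimeSpectrum R)) with hπ
  apply Set.eq_of_subset_of_subset
  · -- range ⊆ closure
    rintro _ ⟨P, rfl⟩
    set q := PrimeSpectrum.comap π P with hqdef
    -- filter of sets with non-member idempotent
    have e_mul : ∀ A B : Set E, eIdem (R := R) A * eIdem B = eIdem (A ∩ B) := by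
      intro A B
      funext p
      by_cases hA : p ∈ A <;> by_cases hB : p ∈ B <;> simp [eIdem, hA, hB]
    have e_univ : eIdem (R := R) (E := E) Set.univ = 1 := by
      funext p; simp [eIdem]
    have e_add_compl : ∀ A : Set E, eIdem (R := R) A + eIdem Aᶜ = 1 := by
      intro A; funext p; by_cases hA : p ∈ A <;> simp [eIdem, hA]
    have hone : (1 : ∀ p : E, residueFieldAt (p : PrimeSpectrum R)) ∉ P.asIdeal := by
      intro h; exact P.isPrime.ne_top (Ideal.eq_top_iff_one _ |>.2 h)
    let F : Filter E :=
      { sets := {A | eIdem (R := R) A ∉ P.asIdeal}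
        univ_sets := by simpa [e_univ] using hone
        sets_of_superset := by
          intro A B hA hAB hB
          apply hA
          have : eIdem (R := R) A = eIdem A * eIdem B := by
            rw [e_mul, Set.inter_eq_left.2 hAB]
          rw [this]
          exact Ideal.mul_mem_left _ _ hB
        inter_sets := by
          intro A B hA hB hAB
          rw [← e_mul] at hAB
          rcases P.isPrime.mem_or_mem hAB with h | h
          · exact hA h
          · exact hB h }
    have hFmem : ∀ A : Set E, A ∈ F ↔ eIdem (R := R) A ∉ P.asIdeal := fun _ => Iff.rfl
    have hcompl : ∀ A : Set E, Aᶜ ∉ F ↔ A ∈ F := by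
      intro A
      rw [hFmem, hFmem, not_not]
      constructor
      · intro hc hA
        have : (1 : ∀ p : E, residueFieldAt (p : PrimeSpectrum R)) ∈ P.asIdeal := by
          rw [← e_add_compl A]; exact Ideal.add_mem _ hA hc
        exact hone this
      · intro hA
        have h0 : eIdem (R := R) A * eIdem Aᶜ ∈ P.asIdeal := by
          rw [e_mul]; simp [eIdem]
          convert (Ideal.zero_mem P.asIdeal) using 1
          funext p; simp [eIdem]
        rcases P.isPrime.mem_or_mem h0 with h | h
        · exact absurd h hA
        · exact h
    let U : Ultrafilter E := Ultrafilter.ofComplNotMemIff F hcompl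
    apply mem_patchClosure_of_ultrafilter E q U
    intro a
    have hq' : a ∈ q.asIdeal ↔ π a ∈ P.asIdeal := by
      rw [hqdef, PrimeSpectrum.comap_asIdeal, Ideal.mem_comap]
    -- π a ∈ P ↔ eIdem (Z a)ᶜ ∈ P
    set Z : Set E := {p : E | a ∈ (p : PrimeSpectrum R).asIdeal} with hZ
    have hπa : ∀ p : E, π a p = 0 ↔ p ∈ Z := by
      intro p
      exact algebraMap_residueFieldAt_eq_zero_iff (p : PrimeSpectrum R) a
    have key : π a ∈ P.asIdeal ↔ eIdem (R := R) Zᶜ ∈ P.asIdeal := by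
      constructor
      · intro h
        have : eIdem (R := R) Zᶜ = π a * (fun p => (π a p)⁻¹) := by
          funext p
          by_cases hp : p ∈ Z
          · simp [eIdem, hp, (hπa p).2 hp]
          · have hne : π a p ≠ 0 := fun h0 => hp ((hπa p).1 h0)
            simp [eIdem, hp, mul_inv_cancel₀ hne]
        rw [this]
        exact Ideal.mul_mem_right _ _ h
      · intro h
        have : π a = eIdem (R := R) Zᶜ * π a := by
          funext p
          by_cases hp : p ∈ Z
          · simp [eIdem, hp, (hπa p).2 hp]
          · simp [eIdem, hp]
        rw [this]
        exact Ideal.mul_mem_right _ _ h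
    rw [hq', key]
    have hUZ : Z ∈ U ↔ Zᶜ ∉ F := by
      constructor
      · intro h hc
        have := Filter.inter_mem (Ultrafilter.mem_coe.1 h) hc
        rw [Set.inter_compl_self] at this
        exact Filter.nonempty_of_mem this |>.ne_empty rfl
      · intro h
        exact (hcompl Z).1 h
    rw [hUZ, hFmem, not_not]
  · -- closure ⊆ range
    intro q hq
    have hE : E.Nonempty := by
      obtain ⟨p, _, hp⟩ := (mem_closure_iff.1 hq) Set.univ isOpen_univ (Set.mem_univ q)
      exact ⟨p, hp⟩
    haveI : Nonempty E := hE.to_subtype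
    set g' : Set (Set E) :=
      {s | ∃ a ∈ q.asIdeal, s = {p : E | a ∈ (p : PrimeSpectrum R).asIdeal}} ∪
      {s | ∃ a ∉ q.asIdeal, s = {p : E | a ∈ (p : PrimeSpectrum R).asIdeal}ᶜ} with hg'
    have hne : (Filter.generate g').NeBot := by
      rw [Filter.generate_neBot_iff]
      intro t hts htfin
      have hOs : ∀ s : Set E, ∃ O : Set (PrimeSpectrum R),
          IsOpen O ∧ q ∈ O ∧ (s ∈ t → s = Subtype.val ⁻¹' O) := by
        intro s
        by_cases hst : s ∈ t
        · rcases hts hst with ⟨a, ha, rfl⟩ | ⟨a, ha, rfl⟩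
          · refine ⟨PrimeSpectrum.zeroLocus {a},
              TopologicalSpace.isOpen_generateFrom_of_mem (Or.inl ⟨a, rfl⟩), ?_, ?_⟩
            · simpa [PrimeSpectrum.mem_zeroLocus, Set.singleton_subset_iff] using ha
            · intro _
              ext p
              simp [PrimeSpectrum.mem_zeroLocus, Set.singleton_subset_iff]
          · refine ⟨(PrimeSpectrum.zeroLocus {a})ᶜ,
              TopologicalSpace.isOpen_generateFrom_of_mem (Or.inr ⟨a, rfl⟩), ?_, ?_⟩
            · simpa [PrimeSpectrum.mem_zeroLocus, Set.singleton_subset_iff] using ha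
            · intro _
              ext p
              simp [PrimeSpectrum.mem_zeroLocus, Set.singleton_subset_iff]
        · exact ⟨Set.univ, isOpen_univ, Set.mem_univ q, fun h => absurd h hst⟩
      choose O hO hqO hs using hOs
      have hOpen : IsOpen (⋂ s ∈ t, O s) := htfin.isOpen_biInter (fun s _ => hO s)
      have hqmem : q ∈ ⋂ s ∈ t, O s := Set.mem_iInter₂.2 fun s _ => hqO s
      obtain ⟨p, hpO, hpE⟩ := (mem_closure_iff.1 hq) _ hOpen hqmem
      refine ⟨⟨p, hpE⟩, ?_⟩
      intro s hst
      rw [hs s hst]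
      exact Set.mem_iInter₂.1 hpO s hst
    let U : Ultrafilter E := @Ultrafilter.of _ (Filter.generate g') hne
    have hUle : (U : Filter E) ≤ Filter.generate g' := @Ultrafilter.of_le _ _ hne
    have hmem : ∀ a : R, a ∈ q.asIdeal ↔ {p : E | a ∈ (p : PrimeSpectrum R).asIdeal} ∈ U := by
      intro a
      constructor
      · intro ha
        exact hUle (Filter.mem_generate_of_mem (Or.inl ⟨a, ha, rfl⟩))
      · intro hUa
        by_contra ha
        have hc : {p : E | a ∈ (p : PrimeSpectrum R).asIdeal}ᶜ ∈ U :=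
          hUle (Filter.mem_generate_of_mem (Or.inr ⟨a, ha, rfl⟩))
        exact Ultrafilter.compl_mem_iff_notMem.1 hc hUa
    refine ⟨⟨ultraIdeal U, ultraIdeal_isPrime U⟩, ?_⟩
    apply PrimeSpectrum.ext
    rw [PrimeSpectrum.comap_asIdeal]
    apply Ideal.ext
    intro a
    rw [Ideal.mem_comap]
    have hset : {p : E | π a p = 0} = {p : E | a ∈ (p : PrimeSpectrum R).asIdeal} := by
      ext p
      exact algebraMap_residueFieldAt_eq_zero_iff (p : PrimeSpectrum R) a
    have : π a ∈ ultraIdeal U ↔ {p : E | a ∈ (p : PrimeSpectrum R).asIdeal} ∈ U := by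
      change {p : E | π a p = 0} ∈ U ↔ _
      rw [hset]
    rw [this, ← hmem a]
end

section
/- If (R, 𝔪) is a local ring of Krull dimension 1 satisfying infinite prime absorbance, then every infinite subset of Spec(R) is dense in the flat topology on Spec(R). -/
/-- The flat (inverse) topology on `Spec R`: the sets `V(a)`, `a ∈ R`, form a subbasis
of opens. -/
def flatTopology (R : Type*) [CommRing R] : TopologicalSpace (PrimeSpectrum R) :=
  TopologicalSpace.generateFrom {U | ∃ a : R, U = PrimeSpectrum.zeroLocus {a}}

open IsLocalRing

/-- In a local ring of Krull dimension 1 there is no chain `q < p < 𝔪`. -/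
lemma aux_no_chain {R : Type*} [CommRing R] [IsLocalRing R]
    (hdim : ringKrullDim R = 1) {q p : PrimeSpectrum R} (h1 : q < p)
    (h2 : p < closedPoint R) : False := by
  let c : LTSeries (PrimeSpectrum R) :=
    ((RelSeries.singleton {(a, b) : PrimeSpectrum R × PrimeSpectrum R | a < b} q).snoc p (by simpa using h1)).snoc (closedPoint R)
      (by simpa using h2)
  have h := Order.LTSeries.length_le_krullDim c
  have hc : c.length = 2 := by simp [c]
  rw [hc, show Order.krullDim (PrimeSpectrum R) = ringKrullDim R from rfl, hdim] at h
  norm_num at h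

/-- In a local P.Z. ring of Krull dimension 1, for any `a` in the maximal ideal,
only finitely many primes fail to contain `a`. -/
lemma aux_finite {R : Type*} [CommRing R] [IsLocalRing R]
    (hdim : ringKrullDim R = 1)
    (hPZ : ∀ F : Set (Ideal R), (∀ q ∈ F, q.IsPrime) →
      ∀ 𝔭 : Ideal R, 𝔭.IsPrime → sInf F ≤ 𝔭 → ∃ q ∈ F, q ≤ 𝔭)
    {a : R} (ha : a ∈ maximalIdeal R) :
    {q : PrimeSpectrum R | a ∉ q.asIdeal}.Finite := by
  set F := {q : PrimeSpectrum R | a ∉ q.asIdeal} with hF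
  -- separating elements
  have hsep : ∀ p ∈ F, ∃ c : R, c ∉ p.asIdeal ∧ ∀ q ∈ F, q ≠ p → c ∈ q.asIdeal := by
    intro p hp
    by_contra hcon
    push_neg at hcon
    have hle : sInf ((fun q : PrimeSpectrum R => q.asIdeal) '' (F \ {p})) ≤ p.asIdeal := by
      intro c hc
      by_contra hcp
      obtain ⟨q, hq, hqp, hcq⟩ := hcon c hcp
      exact hcq (Ideal.mem_sInf.mp hc ⟨q, ⟨hq, hqp⟩, rfl⟩)
    obtain ⟨J, hJ, hJle⟩ := hPZ _ (by rintro J ⟨q, hq, rfl⟩; exact q.2) p.asIdeal p.2 hle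
    obtain ⟨q, ⟨hqF, hqp⟩, rfl⟩ := hJ
    have hpm : p < closedPoint R := by
      refine lt_of_le_of_ne (le_maximalIdeal p.2.ne_top : p.asIdeal ≤ maximalIdeal R) ?_
      intro h
      exact hp (h ▸ ha)
    rcases lt_or_eq_of_le hJle with hlt | heq
    · exact aux_no_chain hdim (show q < p from hlt) hpm
    · exact hqp (PrimeSpectrum.ext heq)
  -- the key ideal
  set S := {y : R | ∃ p ∈ F, ∃ c : R, y = a * c ∧ c ∉ p.asIdeal ∧
      ∀ q ∈ F, q ≠ p → c ∈ q.asIdeal} with hS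
  have hrad : a ∈ (Ideal.span S).radical := by
    rw [Ideal.radical_eq_sInf, Ideal.mem_sInf]
    rintro J ⟨hJle, hJprime⟩
    by_contra haJ
    have hJF : (⟨J, hJprime⟩ : PrimeSpectrum R) ∈ F := haJ
    obtain ⟨c, hc1, hc2⟩ := hsep _ hJF
    have hmem : a * c ∈ S := ⟨⟨J, hJprime⟩, hJF, c, rfl, hc1, hc2⟩
    have := hJle (Ideal.subset_span hmem)
    rcases hJprime.mem_or_mem this with h | h
    exacts [haJ h, hc1 h]
  obtain ⟨n, hn⟩ := hrad
  obtain ⟨T, hTS, hT⟩ := Submodule.mem_span_finite_of_mem_span hn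
  set A : R → Set (PrimeSpectrum R) := fun y =>
    {p : PrimeSpectrum R | p ∈ F ∧ ∃ c : R, y = a * c ∧ c ∉ p.asIdeal ∧
      ∀ q ∈ F, q ≠ p → c ∈ q.asIdeal} with hA
  have hcover : F ⊆ ⋃ y ∈ (T : Set R), A y := by
    intro q hq
    have haq : a ^ n ∉ q.asIdeal := fun h => hq (q.2.mem_of_pow_mem n h)
    have hns : ¬ (T : Set R) ⊆ q.asIdeal := fun h => haq (Ideal.span_le.mpr h hT)
    obtain ⟨y, hyT, hyq⟩ := Set.not_subset.mp hns
    obtain ⟨p, hpF, c, rfl, hc1, hc2⟩ := hTS hyT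
    have hq_eq : q = p := by
      by_contra hne
      exact hyq (Ideal.mul_mem_left _ a (hc2 q hq hne))
    subst hq_eq
    exact Set.mem_biUnion hyT ⟨hq, c, rfl, hc1, hc2⟩
  have hsub : ∀ y : R, (A y).Subsingleton := by
    intro y p₁ hp₁ p₂ hp₂
    by_contra hne
    obtain ⟨hp₁F, c₁, hy₁, hc₁, hall₁⟩ := hp₁
    obtain ⟨hp₂F, c₂, hy₂, hc₂, hall₂⟩ := hp₂
    have h₁ : c₂ ∈ p₁.asIdeal := hall₂ p₁ hp₁F hne
    have hy : y ∈ p₁.asIdeal := hy₂ ▸ Ideal.mul_mem_left _ a h₁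
    rw [hy₁] at hy
    rcases p₁.2.mem_or_mem hy with h | h
    · exact hp₁F h
    · exact hc₁ h
  exact Set.Finite.subset
    (Set.Finite.biUnion T.finite_toSet fun y _ => (hsub y).finite) hcover

/-- If `(R, 𝔪)` is a local ring of Krull dimension `1` satisfying infinite prime
absorbance (a P.Z. ring), then every infinite subset of `Spec R` is dense in the flat
topology on `Spec R`. -/
theorem stmt_16 {R : Type*} [CommRing R] [IsLocalRing R]
    (hdim : ringKrullDim R = 1)
    (hPZ : ∀ F : Set (Ideal R), (∀ q ∈ F, q.IsPrime) →
      ∀ 𝔭 : Ideal R, 𝔭.IsPrime → sInf F ≤ 𝔭 → ∃ q ∈ F, q ≤ 𝔭) :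
    ∀ E : Set (PrimeSpectrum R), E.Infinite → @Dense _ (flatTopology R) E := by
  intro E hE
  have hbasis := @TopologicalSpace.isTopologicalBasis_of_subbasis _ (flatTopology R)
      {U | ∃ a : R, U = PrimeSpectrum.zeroLocus {a}} rfl
  rw [@TopologicalSpace.IsTopologicalBasis.dense_iff _ (flatTopology R) _ hbasis E]
  rintro o ⟨f, ⟨hfin, hsubb⟩, rfl⟩ ⟨p, hp⟩
  have hC : (⋃ U ∈ f, Uᶜ).Finite := by
    refine Set.Finite.biUnion hfin ?_
    intro U hU
    obtain ⟨a, rfl⟩ := hsubb hU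
    have hap : a ∈ p.asIdeal := (PrimeSpectrum.mem_zeroLocus _ _).mp (hp _ hU) rfl
    have ham : a ∈ maximalIdeal R := le_maximalIdeal p.2.ne_top hap
    refine (aux_finite hdim hPZ ham).subset ?_
    intro q hq
    simp only [Set.mem_compl_iff, PrimeSpectrum.mem_zeroLocus,
      Set.singleton_subset_iff] at hq
    exact hq
  obtain ⟨q, hq⟩ := (hE.diff hC).nonempty
  refine ⟨q, Set.mem_sInter.mpr fun U hU => ?_, hq.1⟩
  by_contra h
  exact hq.2 (Set.mem_biUnion hU h)
end
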